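/- The threshold p*_{2n} = 1/2 + (1/2)·√(1 - ((2·4···(2n))/(3·5···(2n+1)))^{1/n}) is strictly decreasing in n and converges to 1/2 as n → ∞. -/

import Mathlib

open Real Filter

/-- The ratio `r_n = ∏_{k=1}^n (2k)/(2k+1)`. -/
noncomputable def rRatio (n : ℕ) : ℝ :=
  ∏ k ∈ Finset.Icc 1 n, ((2*k : ℝ) / (2*k + 1))

/-- The optimal signal quality `p*_{2n} = 1/2 + (1/2)√(1 - r_n^{1/n})`. -/
noncomputable def pStar (n : ℕ) : ℝ :=
  1/2 + (1/2) * Real.sqrt (1 - (rRatio n) ^ ((n : ℝ)⁻¹))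

lemma rRatio_pos (n : ℕ) : 0 < rRatio n := by
  apply Finset.prod_pos
  intro k hk
  have : (0:ℝ) < 2*k + 1 := by positivity
  have hk1 : 1 ≤ k := (Finset.mem_Icc.mp hk).1
  have : (0:ℝ) < 2*k := by
    have : (1:ℝ) ≤ (k:ℝ) := by exact_mod_cast hk1
    linarith
  positivity

lemma rRatio_le_one (n : ℕ) : rRatio n ≤ 1 := by
  apply Finset.prod_le_one
  · intro k hk
    positivity
  · intro k hk
    rw [div_le_one (by positivity)]
    linarith

lemma rRatio_succ (n : ℕ) :
    rRatio (n+1) = rRatio n * ((2*(n+1) : ℝ) / (2*(n+1) + 1)) := by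
  unfold rRatio
  rw [Finset.prod_Icc_succ_top (by omega)]
  push_cast
  ring_nf

/-- telescoping lower bound -/
lemma rRatio_ge (n : ℕ) : ((n:ℝ)+1)⁻¹ ≤ rRatio n := by
  induction n with
  | zero => simp [rRatio]
  | succ n ih =>
    rw [rRatio_succ]
    have h1 : (0:ℝ) < (n:ℝ)+1 := by positivity
    have h2 : (0:ℝ) < 2*((n:ℝ)+1) + 1 := by positivity
    have key : ((n:ℝ)+1+1)⁻¹ ≤ ((n:ℝ)+1)⁻¹ * ((2*((n:ℝ)+1)) / (2*((n:ℝ)+1) + 1)) := by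
      have h3 : ((n:ℝ)+1)⁻¹ * ((2*((n:ℝ)+1)) / (2*((n:ℝ)+1) + 1)) = 2 / (2*(n:ℝ)+3) := by
        field_simp; ring
      rw [h3, inv_eq_one_div, div_le_div_iff₀ (by positivity) (by positivity)]
      linarith
    push_cast
    calc ((n:ℝ)+1+1)⁻¹ ≤ ((n:ℝ)+1)⁻¹ * ((2*((n:ℝ)+1)) / (2*((n:ℝ)+1) + 1)) := key
      _ ≤ rRatio n * ((2*((n:ℝ)+1)) / (2*((n:ℝ)+1) + 1)) := by
          apply mul_le_mul_of_nonneg_right ih (by positivity)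

noncomputable def q (n : ℕ) : ℝ := rRatio n ^ ((n : ℝ)⁻¹)

lemma q_pos (n : ℕ) : 0 < q n := Real.rpow_pos_of_pos (rRatio_pos n) _

lemma q_le_one (n : ℕ) : q n ≤ 1 :=
  Real.rpow_le_one (rRatio_pos n).le (rRatio_le_one n) (by positivity)

lemma q_lt_succ (n : ℕ) (hn : 1 ≤ n) : q n < q (n+1) := by
  have hr := rRatio_pos n
  have hr1 := rRatio_pos (n+1)
  have hnR : (0:ℝ) < n := by exact_mod_cast hn
  rw [q, q, Real.rpow_def_of_pos hr, Real.rpow_def_of_pos hr1]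
  apply Real.exp_lt_exp.mpr
  -- goal: log (rRatio n) * n⁻¹ < log (rRatio (n+1)) * (n+1)⁻¹
  have hlog : Real.log (rRatio (n+1)) =
      Real.log (rRatio n) + Real.log ((2*((n:ℝ)+1)) / (2*((n:ℝ)+1) + 1)) := by
    rw [rRatio_succ, Real.log_mul hr.ne' (by positivity)]
  -- key : log (rRatio n) < n * log a_{n+1}
  set a : ℝ := (2*((n:ℝ)+1)) / (2*((n:ℝ)+1) + 1) with ha
  have key : Real.log (rRatio n) < n * Real.log a := by
    have : Real.log (rRatio n) = ∑ k ∈ Finset.Icc 1 n, Real.log ((2*k : ℝ) / (2*k + 1)) := by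
      rw [rRatio, Real.log_prod]
      intro k hk
      have hk1 : 1 ≤ k := (Finset.mem_Icc.mp hk).1
      have : (1:ℝ) ≤ (k:ℝ) := by exact_mod_cast hk1
      positivity
    rw [this]
    have hcard : ((Finset.Icc 1 n).card : ℝ) = n := by simp
    calc ∑ k ∈ Finset.Icc 1 n, Real.log ((2*k : ℝ) / (2*k + 1))
        < ∑ _k ∈ Finset.Icc 1 n, Real.log a := by
          apply Finset.sum_lt_sum_of_nonempty
          · exact Finset.nonempty_Icc.mpr hn
          · intro k hk
            obtain ⟨hk1, hk2⟩ := Finset.mem_Icc.mp hk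
            apply Real.log_lt_log
            · have : (1:ℝ) ≤ (k:ℝ) := by exact_mod_cast hk1
              positivity
            · rw [div_lt_div_iff₀ (by positivity) (by positivity)]
              have hkn : (k:ℝ) ≤ n := by exact_mod_cast hk2
              nlinarith
      _ = n * Real.log a := by rw [Finset.sum_const, nsmul_eq_mul, hcard]
  have hnn : (0:ℝ) < (n:ℝ)+1 := by positivity
  rw [hlog]
  push_cast
  rw [← div_eq_mul_inv, ← div_eq_mul_inv, div_lt_div_iff₀ hnR hnn]
  nlinarith [key]
lemma q_strictMono {m n : ℕ} (hn : 1 ≤ n) (h : n < m) : q n < q m := by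
  induction m with
  | zero => omega
  | succ m ih =>
    rcases Nat.lt_succ_iff_lt_or_eq.mp h with h' | h'
    · exact (ih h').trans (q_lt_succ m (by omega))
    · subst h'; exact q_lt_succ n hn

lemma q_tendsto : Tendsto q atTop (nhds 1) := by
  have hlow : Tendsto (fun n : ℕ => (((n:ℝ)+1)⁻¹) ^ ((n:ℝ)⁻¹)) atTop (nhds 1) := by
    have h := (tendsto_rpow_div_mul_add (-1 : ℝ) 1 (-1) zero_ne_one).comp
      (tendsto_atTop_add_const_right atTop (1:ℝ) tendsto_natCast_atTop_atTop)
    apply h.congr'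
    filter_upwards [eventually_gt_atTop 0] with n hn
    have hnR : (0:ℝ) < n := by exact_mod_cast hn
    have h1 : (0:ℝ) < (n:ℝ)+1 := by positivity
    simp only [Function.comp_apply]
    rw [← Real.rpow_neg_one ((n:ℝ)+1), ← Real.rpow_mul h1.le]
    congr 1
    field_simp
    rw [show (n:ℝ)+1+-1 = n by ring, div_self hnR.ne']
  apply tendsto_of_tendsto_of_tendsto_of_le_of_le' hlow tendsto_const_nhds
  · filter_upwards with n
    exact Real.rpow_le_rpow (by positivity) (rRatio_ge n) (by positivity)
  · filter_upwards with n using q_le_one n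

theorem stmt_6 :
    (∀ m n : ℕ, 1 ≤ n → n < m → pStar m < pStar n) ∧
    Filter.Tendsto pStar Filter.atTop (nhds (1/2)) := by
  constructor
  · intro m n hn hnm
    have hq := q_strictMono hn hnm
    unfold pStar
    have h1 : 1 - rRatio m ^ ((m:ℝ)⁻¹) < 1 - rRatio n ^ ((n:ℝ)⁻¹) := by
      have := hq; unfold q at this; linarith
    have h0 : 0 ≤ 1 - rRatio m ^ ((m:ℝ)⁻¹) := by
      have := q_le_one m; unfold q at this; linarith
    have := Real.sqrt_lt_sqrt h0 h1
    linarith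
  · have : Tendsto (fun n => Real.sqrt (1 - q n)) atTop (nhds 0) := by
      have h1 : Tendsto (fun n => 1 - q n) atTop (nhds 0) := by
        have := q_tendsto
        have := (tendsto_const_nhds (x := (1:ℝ)) (f := atTop (α := ℕ))).sub q_tendsto
        simpa using this
      have := (Real.continuous_sqrt.tendsto 0).comp h1
      simpa [Function.comp_def] using this
    have h2 : Tendsto pStar atTop (nhds (1/2 + (1/2) * 0)) := by
      apply Tendsto.add tendsto_const_nhds
      exact Tendsto.const_mul _ this
    simpa using h2
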